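/- Let f : ℝ → ℂ be measurable and 2π-periodic with ∫₀^{2π} |f(θ)|² dθ = 1. Set e = ∫₀^{2π} e^{iθ} |f(θ)|² dθ ∈ ℂ and σ = 1 − |e|², and assume e ≠ 0. For g ∈ ℝ with cos g ≠ 1, set r = (1/2)√((1 − σ)(2 − 2 cos g)). Then the ambiguity function of f under circle translations satisfies |∫₀^{2π} f(θ) conj(f(θ − g)) dθ| ≤ 2√σ/r + σ/r². -/

import Mathlib

open MeasureTheory

lemma periodic_intervalIntegrable {E : Type*} [NormedAddCommGroup E] {w : ℝ → E} {T : ℝ}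
    (hT : 0 < T) (hp : Function.Periodic w T)
    (h : IntervalIntegrable w MeasureTheory.volume 0 T) :
    ∀ a b : ℝ, IntervalIntegrable w MeasureTheory.volume a b := by
  have step : ∀ n : ℤ, IntervalIntegrable w volume (n * T) (n * T + T) := by
    intro n
    have h2 := h.comp_sub_right (n * T)
    have hw : (fun x => w (x - n * T)) = w := funext fun x => by
      simpa [zsmul_eq_mul] using hp.sub_zsmul_eq n (x := x)
    rw [hw] at h2
    simpa [add_comm] using h2
  have chain : ∀ n : ℕ, IntervalIntegrable w volume (-(n * T)) (n * T) := by
    intro n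
    induction n with
    | zero => simp
    | succ k ih =>
      have hpos : IntervalIntegrable w volume ((k : ℝ) * T) (((k : ℕ) + 1 : ℝ) * T) := by
        have := step (k : ℤ)
        push_cast at this ⊢
        convert this using 1
        ring
      have hneg : IntervalIntegrable w volume (-(((k : ℕ) + 1 : ℝ) * T)) (-((k : ℝ) * T)) := by
        have := step (-(k + 1) : ℤ)
        push_cast at this ⊢
        constructor
        · convert this.1 using 2 <;> ring
        · convert this.2 using 2 <;> ring
      have := (hneg.trans ih).trans hpos
      push_cast at this ⊢
      exact this
  intro a b
  obtain ⟨n, hn⟩ := exists_nat_ge ((|a| ⊔ |b|) / T)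
  have hnT : |a| ⊔ |b| ≤ n * T := by
    rw [div_le_iff₀ hT] at hn
    exact hn
  apply (chain n).mono_set
  have h1 : -(n * T) ≤ (n : ℝ) * T := by
    have : (0:ℝ) ≤ n * T := by positivity
    linarith
  rw [Set.uIcc_of_le h1]
  have ha := abs_le.mp (le_sup_left.trans hnT : |a| ≤ n * T)
  have hb := abs_le.mp (le_sup_right.trans hnT : |b| ≤ n * T)
  apply Set.uIcc_subset_Icc <;> constructor
  · exact ha.1
  · exact ha.2
  · exact hb.1
  · exact hb.2

lemma mul_conj_integrable {μ : Measure ℝ} {u v : ℝ → ℂ}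
    (hum : Measurable u) (hvm : Measurable v)
    (hu2 : Integrable (fun θ => ‖u θ‖ ^ 2) μ) (hv2 : Integrable (fun θ => ‖v θ‖ ^ 2) μ) :
    Integrable (fun θ => u θ * (starRingEnd ℂ) (v θ)) μ := by
  refine Integrable.mono' (((hu2.add hv2).div_const 2))
    ((hum.mul (continuous_star.measurable.comp hvm)).aestronglyMeasurable)
    (Filter.Eventually.of_forall fun θ => ?_)
  have h1 : ‖u θ * (starRingEnd ℂ) (v θ)‖ = ‖u θ‖ * ‖v θ‖ := by
    simp [norm_mul]
  rw [h1]
  simp only [Pi.add_apply]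
  nlinarith [sq_nonneg (‖u θ‖ - ‖v θ‖)]

lemma cs_aux {μ : Measure ℝ} {u v : ℝ → ℂ}
    (hum : Measurable u) (hvm : Measurable v)
    (hu2 : Integrable (fun θ => ‖u θ‖ ^ 2) μ) (hv2 : Integrable (fun θ => ‖v θ‖ ^ 2) μ) :
    ‖∫ θ, u θ * (starRingEnd ℂ) (v θ) ∂μ‖ ≤
      Real.sqrt (∫ θ, ‖u θ‖ ^ 2 ∂μ) * Real.sqrt (∫ θ, ‖v θ‖ ^ 2 ∂μ) := by
  have hu : MemLp u 2 μ := (memLp_two_iff_integrable_sq_norm hum.aestronglyMeasurable).mpr hu2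
  have hv : MemLp v 2 μ := (memLp_two_iff_integrable_sq_norm hvm.aestronglyMeasurable).mpr hv2
  have hpq : Real.HolderConjugate 2 2 := (Real.holderConjugate_iff_eq_conjExponent one_lt_two).mpr (by norm_num)
  have hu' : MemLp u (ENNReal.ofReal 2) μ := by simpa [ENNReal.ofReal_ofNat] using hu
  have hv' : MemLp v (ENNReal.ofReal 2) μ := by simpa [ENNReal.ofReal_ofNat] using hv
  calc ‖∫ θ, u θ * (starRingEnd ℂ) (v θ) ∂μ‖
      ≤ ∫ θ, ‖u θ * (starRingEnd ℂ) (v θ)‖ ∂μ := norm_integral_le_integral_norm _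
    _ = ∫ θ, ‖u θ‖ * ‖v θ‖ ∂μ := by simp [norm_mul]
    _ ≤ (∫ θ, ‖u θ‖ ^ (2:ℝ) ∂μ) ^ ((1:ℝ)/2) * (∫ θ, ‖v θ‖ ^ (2:ℝ) ∂μ) ^ ((1:ℝ)/2) :=
        integral_mul_norm_le_Lp_mul_Lq hpq hu' hv'
    _ = Real.sqrt (∫ θ, ‖u θ‖ ^ 2 ∂μ) * Real.sqrt (∫ θ, ‖v θ‖ ^ 2 ∂μ) := by
        have h2 : ∀ x : ℝ, x ^ (2:ℝ) = x ^ (2:ℕ) := fun x => by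
          rw [show ((2:ℝ)) = ((2:ℕ):ℝ) by norm_num, Real.rpow_natCast]
        simp_rw [h2]
        rw [Real.sqrt_eq_rpow, Real.sqrt_eq_rpow]

lemma var_aux {μ : Measure ℝ} {u : ℝ → ℂ}
    (hu2 : Integrable (fun θ => ‖u θ‖ ^ 2) μ)
    (hu1 : ∫ θ, ‖u θ‖ ^ 2 ∂μ = 1) (E : ℂ)
    (hE : ∫ θ : ℝ, Complex.exp ((θ:ℂ) * Complex.I) * ((‖u θ‖ ^ 2 : ℝ) : ℂ) ∂μ = E) :
    Integrable (fun θ : ℝ => ‖(Complex.exp ((θ:ℂ) * Complex.I) - E) * u θ‖ ^ 2) μ ∧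
      ∫ θ : ℝ, ‖(Complex.exp ((θ:ℂ) * Complex.I) - E) * u θ‖ ^ 2 ∂μ = 1 - ‖E‖ ^ 2 := by
  set c : ℝ → ℂ := fun θ => Complex.exp ((θ:ℂ) * Complex.I) with hc
  have hcn : ∀ θ : ℝ, ‖c θ‖ = 1 := fun θ => by
    simp [hc, Complex.norm_exp_ofReal_mul_I]
  have hcm : Measurable c :=
    (Complex.continuous_exp.comp ((Complex.continuous_ofReal).mul continuous_const)).measurable
  have hcw : Integrable (fun θ : ℝ => c θ * ((‖u θ‖ ^ 2 : ℝ) : ℂ)) μ :=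
    hu2.ofReal.bdd_mul hcm.aestronglyMeasurable (Filter.Eventually.of_forall fun θ => (hcn θ).le)
  have hpt : ∀ θ : ℝ, ‖(c θ - E) * u θ‖ ^ 2
      = (1 + ‖E‖ ^ 2) * ‖u θ‖ ^ 2 - 2 * ((c θ * ((‖u θ‖ ^ 2 : ℝ) : ℂ)) * (starRingEnd ℂ) E).re := by
    intro θ
    have hz : Complex.normSq (c θ) = 1 := by
      rw [← Complex.sq_norm, hcn θ]; norm_num
    have h1 : ‖(c θ - E) * u θ‖ ^ 2 = Complex.normSq (c θ - E) * ‖u θ‖ ^ 2 := by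
      rw [norm_mul, mul_pow, ← Complex.sq_norm]
    rw [h1, Complex.normSq_sub, hz]
    have h2 : ((c θ * ((‖u θ‖ ^ 2 : ℝ) : ℂ)) * (starRingEnd ℂ) E).re
        = (c θ * (starRingEnd ℂ) E).re * ‖u θ‖ ^ 2 := by
      rw [mul_comm (c θ) _, mul_assoc, Complex.re_ofReal_mul]
      ring
    rw [h2, ← Complex.sq_norm E]
    ring
  have hre : Integrable (fun θ : ℝ => ((c θ * ((‖u θ‖ ^ 2 : ℝ) : ℂ)) * (starRingEnd ℂ) E).re) μ :=
    (hcw.mul_const _).re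
  have hint : Integrable (fun θ : ℝ => ‖(c θ - E) * u θ‖ ^ 2) μ := by
    have : Integrable (fun θ : ℝ => (1 + ‖E‖ ^ 2) * ‖u θ‖ ^ 2
        - 2 * ((c θ * ((‖u θ‖ ^ 2 : ℝ) : ℂ)) * (starRingEnd ℂ) E).re) μ :=
      (hu2.const_mul _).sub (hre.const_mul 2)
    exact this.congr (Filter.Eventually.of_forall fun θ => (hpt θ).symm)
  refine ⟨hint, ?_⟩
  calc ∫ θ : ℝ, ‖(c θ - E) * u θ‖ ^ 2 ∂μ
      = ∫ θ : ℝ, ((1 + ‖E‖ ^ 2) * ‖u θ‖ ^ 2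
          - 2 * ((c θ * ((‖u θ‖ ^ 2 : ℝ) : ℂ)) * (starRingEnd ℂ) E).re) ∂μ :=
        integral_congr_ae (Filter.Eventually.of_forall fun θ => hpt θ)
    _ = (1 + ‖E‖ ^ 2) * ∫ θ, ‖u θ‖ ^ 2 ∂μ
          - 2 * ∫ θ : ℝ, ((c θ * ((‖u θ‖ ^ 2 : ℝ) : ℂ)) * (starRingEnd ℂ) E).re ∂μ := by
        rw [integral_sub (hu2.const_mul _) (hre.const_mul 2), integral_const_mul,
          integral_const_mul]
    _ = 1 - ‖E‖ ^ 2 := by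
        have hri := (Complex.reCLM : ℂ →L[ℝ] ℝ).integral_comp_comm
          (hcw.mul_const ((starRingEnd ℂ) E))
        simp only [Complex.reCLM_apply] at hri
        rw [hu1, hri, integral_mul_const, hE]
        have : (E * (starRingEnd ℂ) E).re = ‖E‖ ^ 2 := by
          rw [Complex.mul_conj]
          rw [Complex.ofReal_re, Complex.normSq_eq_norm_sq]
        rw [this]; ring

/-- Decay estimate for the ambiguity function of a unit-norm window on the
circle under circle translations, in terms of the variance
`σ = 1 − |e|²` of the unitary observable of multiplication by `e^{iθ}`. -/
theorem stmt13 (f : ℝ → ℂ) (hmeas : Measurable f)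
    (hper : ∀ θ : ℝ, f (θ + 2 * Real.pi) = f θ)
    (hnorm : ∫ θ in (0 : ℝ)..(2 * Real.pi), ‖f θ‖ ^ 2 = 1)
    (e : ℂ) (σ : ℝ)
    (he : e = ∫ θ in (0 : ℝ)..(2 * Real.pi),
      Complex.exp (θ * Complex.I) * (‖f θ‖ ^ 2 : ℝ))
    (hσ : σ = 1 - ‖e‖ ^ 2) (hene : e ≠ 0)
    (g : ℝ) (hg : Real.cos g ≠ 1)
    (r : ℝ)
    (hr : r = (1 / 2) * Real.sqrt ((1 - σ) * (2 - 2 * Real.cos g))) :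
    ‖∫ θ in (0 : ℝ)..(2 * Real.pi), f θ * (starRingEnd ℂ) (f (θ - g))‖ ≤
      2 * Real.sqrt σ / r + σ / r ^ 2 := by
  have hπ : (0:ℝ) < 2 * Real.pi := by positivity
  have hcm : Measurable (fun θ : ℝ => Complex.exp ((θ:ℂ) * Complex.I)) :=
    (Complex.continuous_exp.comp ((Complex.continuous_ofReal).mul continuous_const)).measurable
  have hcn : ∀ θ : ℝ, ‖Complex.exp ((θ:ℂ) * Complex.I)‖ = 1 := fun θ => by
    simp [Complex.norm_exp_ofReal_mul_I]
  have hvm : Measurable (fun θ : ℝ => f (θ - g)) := hmeas.comp (measurable_id.sub_const g)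
  -- periodicity of the weight
  have hwper : Function.Periodic (fun θ : ℝ => ‖f θ‖ ^ 2) (2 * Real.pi) := fun θ => by
    simp [hper θ]
  -- interval integrability of the weight on one period
  have hwint : IntervalIntegrable (fun θ : ℝ => ‖f θ‖ ^ 2) volume 0 (2 * Real.pi) := by
    by_contra h
    rw [intervalIntegral.integral_undef h] at hnorm
    exact zero_ne_one hnorm
  have hallint := periodic_intervalIntegrable hπ hwper hwint
  -- μ-versions
  have hwμ : Integrable (fun θ : ℝ => ‖f θ‖ ^ 2) (volume.restrict (Set.Ioc 0 (2 * Real.pi))) :=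
    hwint.1
  have hw1 : ∫ θ in Set.Ioc (0:ℝ) (2 * Real.pi), ‖f θ‖ ^ 2 = 1 := by
    rw [← intervalIntegral.integral_of_le hπ.le]; exact hnorm
  -- translated weight
  have hvint : IntervalIntegrable (fun θ : ℝ => ‖f (θ - g)‖ ^ 2) volume 0 (2 * Real.pi) := by
    have h2 := (hallint (-g) (2 * Real.pi - g)).comp_sub_right g
    simpa using h2
  have hv2 : Integrable (fun θ : ℝ => ‖f (θ - g)‖ ^ 2)
      (volume.restrict (Set.Ioc 0 (2 * Real.pi))) := hvint.1
  have hv1 : ∫ θ in Set.Ioc (0:ℝ) (2 * Real.pi), ‖f (θ - g)‖ ^ 2 = 1 := by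
    rw [← intervalIntegral.integral_of_le hπ.le]
    calc ∫ θ in (0:ℝ)..(2 * Real.pi), ‖f (θ - g)‖ ^ 2
        = ∫ θ in (0 - g)..(2 * Real.pi - g), ‖f θ‖ ^ 2 :=
          intervalIntegral.integral_comp_sub_right (fun θ => ‖f θ‖ ^ 2) g
      _ = ∫ θ in (-g)..(-g + 2 * Real.pi), ‖f θ‖ ^ 2 := by
          rw [show (0:ℝ) - g = -g by ring, show 2 * Real.pi - g = -g + 2 * Real.pi by ring]
      _ = ∫ θ in (0:ℝ)..(0 + 2 * Real.pi), ‖f θ‖ ^ 2 := hwper.intervalIntegral_add_eq (-g) 0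
      _ = 1 := by rw [zero_add]; exact hnorm
  -- the expected value e over μ
  have he' : ∫ θ in Set.Ioc (0:ℝ) (2 * Real.pi),
      Complex.exp ((θ:ℂ) * Complex.I) * ((‖f θ‖ ^ 2 : ℝ) : ℂ) = e := by
    rw [he, intervalIntegral.integral_of_le hπ.le]
  -- the function F = c * w and its properties
  have hFper : Function.Periodic
      (fun θ : ℝ => Complex.exp ((θ:ℂ) * Complex.I) * ((‖f θ‖ ^ 2 : ℝ) : ℂ)) (2 * Real.pi) := by
    intro θ
    have hexp : Complex.exp (((θ + 2 * Real.pi : ℝ) : ℂ) * Complex.I)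
        = Complex.exp ((θ:ℂ) * Complex.I) := by
      push_cast
      rw [add_mul, Complex.exp_add, Complex.exp_two_pi_mul_I, mul_one]
    simp only [hexp, hper θ]
  have hFint : ∀ a b : ℝ, IntervalIntegrable
      (fun θ : ℝ => Complex.exp ((θ:ℂ) * Complex.I) * ((‖f θ‖ ^ 2 : ℝ) : ℂ)) volume a b := by
    intro a b
    constructor
    · exact ((hallint a b).1.ofReal).bdd_mul hcm.aestronglyMeasurable (Filter.Eventually.of_forall fun θ => (hcn θ).le)
    · exact ((hallint a b).2.ofReal).bdd_mul hcm.aestronglyMeasurable (Filter.Eventually.of_forall fun θ => (hcn θ).le)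
  -- expected value of the translate
  set m : ℂ := Complex.exp ((g:ℂ) * Complex.I) * e with hmdef
  have hm : ∫ θ in Set.Ioc (0:ℝ) (2 * Real.pi),
      Complex.exp ((θ:ℂ) * Complex.I) * ((‖f (θ - g)‖ ^ 2 : ℝ) : ℂ) = m := by
    rw [← intervalIntegral.integral_of_le hπ.le]
    have hpt : ∀ θ : ℝ, Complex.exp ((θ:ℂ) * Complex.I) * ((‖f (θ - g)‖ ^ 2 : ℝ) : ℂ)
        = Complex.exp ((g:ℂ) * Complex.I)
          * (Complex.exp (((θ - g : ℝ):ℂ) * Complex.I) * ((‖f (θ - g)‖ ^ 2 : ℝ) : ℂ)) := by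
      intro θ
      have : Complex.exp ((θ:ℂ) * Complex.I)
          = Complex.exp ((g:ℂ) * Complex.I) * Complex.exp (((θ - g : ℝ):ℂ) * Complex.I) := by
        rw [← Complex.exp_add]
        congr 1
        push_cast
        ring
      rw [this, mul_assoc]
    calc ∫ θ in (0:ℝ)..(2 * Real.pi),
          Complex.exp ((θ:ℂ) * Complex.I) * ((‖f (θ - g)‖ ^ 2 : ℝ) : ℂ)
        = ∫ θ in (0:ℝ)..(2 * Real.pi), Complex.exp ((g:ℂ) * Complex.I)
            * (Complex.exp (((θ - g : ℝ):ℂ) * Complex.I) * ((‖f (θ - g)‖ ^ 2 : ℝ) : ℂ)) := by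
          simp_rw [hpt]
      _ = Complex.exp ((g:ℂ) * Complex.I) * ∫ θ in (0:ℝ)..(2 * Real.pi),
            Complex.exp (((θ - g : ℝ):ℂ) * Complex.I) * ((‖f (θ - g)‖ ^ 2 : ℝ) : ℂ) :=
          intervalIntegral.integral_const_mul _ _
      _ = Complex.exp ((g:ℂ) * Complex.I) * ∫ θ in (0 - g)..(2 * Real.pi - g),
            Complex.exp ((θ:ℂ) * Complex.I) * ((‖f θ‖ ^ 2 : ℝ) : ℂ) := by
          rw [intervalIntegral.integral_comp_sub_right
            (fun θ : ℝ => Complex.exp ((θ:ℂ) * Complex.I) * ((‖f θ‖ ^ 2 : ℝ) : ℂ)) g]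
      _ = Complex.exp ((g:ℂ) * Complex.I) * ∫ θ in (-g)..(-g + 2 * Real.pi),
            Complex.exp ((θ:ℂ) * Complex.I) * ((‖f θ‖ ^ 2 : ℝ) : ℂ) := by
          rw [show (0:ℝ) - g = -g by ring, show 2 * Real.pi - g = -g + 2 * Real.pi by ring]
      _ = Complex.exp ((g:ℂ) * Complex.I) * ∫ θ in (0:ℝ)..(0 + 2 * Real.pi),
            Complex.exp ((θ:ℂ) * Complex.I) * ((‖f θ‖ ^ 2 : ℝ) : ℂ) := by
          rw [hFper.intervalIntegral_add_eq (-g) 0]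
      _ = m := by
          rw [zero_add, hmdef, ← he]
  -- variances
  obtain ⟨hintu, hvaru⟩ := var_aux hwμ hw1 e he'
  obtain ⟨hintv, hvarv⟩ := var_aux hv2 hv1 m hm
  -- norm of m
  have hme : ‖m‖ = ‖e‖ := by
    rw [hmdef, norm_mul, hcn g, one_mul]
  -- σ nonneg and e norm bounds
  have hle1 : ‖e‖ ≤ 1 := by
    rw [← he']
    calc ‖∫ θ in Set.Ioc (0:ℝ) (2 * Real.pi),
          Complex.exp ((θ:ℂ) * Complex.I) * ((‖f θ‖ ^ 2 : ℝ) : ℂ)‖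
        ≤ ∫ θ in Set.Ioc (0:ℝ) (2 * Real.pi),
            ‖Complex.exp ((θ:ℂ) * Complex.I) * ((‖f θ‖ ^ 2 : ℝ) : ℂ)‖ :=
          norm_integral_le_integral_norm _
      _ = ∫ θ in Set.Ioc (0:ℝ) (2 * Real.pi), ‖f θ‖ ^ 2 := by
          refine integral_congr_ae (Filter.Eventually.of_forall fun θ => ?_)
          simp only [norm_mul, hcn θ, one_mul, Complex.norm_real]
          exact Real.norm_of_nonneg (by positivity)
      _ = 1 := hw1
  have hσnn : 0 ≤ σ := by
    rw [hσ]
    nlinarith [norm_nonneg e]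
  have hσ1 : 1 - σ = ‖e‖ ^ 2 := by rw [hσ]; ring
  -- r positive
  have hcg : Real.cos g < 1 := lt_of_le_of_ne (Real.cos_le_one g) hg
  have hepos : 0 < ‖e‖ := norm_pos_iff.mpr hene
  have hrpos : 0 < r := by
    rw [hr]
    have h1 : 0 < (1 - σ) * (2 - 2 * Real.cos g) := by
      apply mul_pos
      · rw [hσ1]; positivity
      · linarith
    positivity
  -- key inner product quantities
  set A : ℂ := ∫ θ in Set.Ioc (0:ℝ) (2 * Real.pi),
    f θ * (starRingEnd ℂ) (f (θ - g)) with hAdef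
  set B : ℂ := ∫ θ in Set.Ioc (0:ℝ) (2 * Real.pi),
    Complex.exp ((θ:ℂ) * Complex.I) * (f θ * (starRingEnd ℂ) (f (θ - g))) with hBdef
  have hI_fv : Integrable (fun θ : ℝ => f θ * (starRingEnd ℂ) (f (θ - g)))
      (volume.restrict (Set.Ioc 0 (2 * Real.pi))) :=
    mul_conj_integrable hmeas hvm hwμ hv2
  have hI_cfv : Integrable
      (fun θ : ℝ => Complex.exp ((θ:ℂ) * Complex.I) * (f θ * (starRingEnd ℂ) (f (θ - g))))
      (volume.restrict (Set.Ioc 0 (2 * Real.pi))) :=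
    hI_fv.bdd_mul hcm.aestronglyMeasurable (Filter.Eventually.of_forall fun θ => (hcn θ).le)
  -- first difference
  have hBe : ∫ θ in Set.Ioc (0:ℝ) (2 * Real.pi),
      ((Complex.exp ((θ:ℂ) * Complex.I) - e) * f θ) * (starRingEnd ℂ) (f (θ - g))
      = B - e * A := by
    have hpt : ∀ θ : ℝ, ((Complex.exp ((θ:ℂ) * Complex.I) - e) * f θ) * (starRingEnd ℂ) (f (θ - g))
        = Complex.exp ((θ:ℂ) * Complex.I) * (f θ * (starRingEnd ℂ) (f (θ - g)))
          - e * (f θ * (starRingEnd ℂ) (f (θ - g))) := fun θ => by ring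
    rw [integral_congr_ae (Filter.Eventually.of_forall hpt),
      integral_sub hI_cfv (hI_fv.const_mul e), integral_const_mul, hBdef, hAdef]
  -- second difference
  have hBm : ∫ θ in Set.Ioc (0:ℝ) (2 * Real.pi),
      f θ * (starRingEnd ℂ) ((starRingEnd ℂ) (Complex.exp ((θ:ℂ) * Complex.I) - m) * f (θ - g))
      = B - m * A := by
    have hpt : ∀ θ : ℝ,
        f θ * (starRingEnd ℂ) ((starRingEnd ℂ) (Complex.exp ((θ:ℂ) * Complex.I) - m) * f (θ - g))
        = Complex.exp ((θ:ℂ) * Complex.I) * (f θ * (starRingEnd ℂ) (f (θ - g)))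
          - m * (f θ * (starRingEnd ℂ) (f (θ - g))) := fun θ => by
      rw [map_mul, Complex.conj_conj]
      ring
    rw [integral_congr_ae (Filter.Eventually.of_forall hpt),
      integral_sub hI_cfv (hI_fv.const_mul m), integral_const_mul, hBdef, hAdef]
  -- Cauchy-Schwarz bounds
  have hCS1 : ‖B - e * A‖ ≤ Real.sqrt σ := by
    rw [← hBe]
    have := cs_aux (μ := volume.restrict (Set.Ioc 0 (2 * Real.pi)))
      (u := fun θ => (Complex.exp ((θ:ℂ) * Complex.I) - e) * f θ) ((hcm.sub_const e).mul hmeas) hvm hintu hv2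
    rw [hvaru, hv1, Real.sqrt_one, mul_one, ← hσ] at this
    exact this
  have hCS2 : ‖B - m * A‖ ≤ Real.sqrt σ := by
    rw [← hBm]
    have hbm : Measurable (fun θ : ℝ =>
        (starRingEnd ℂ) (Complex.exp ((θ:ℂ) * Complex.I) - m)) :=
      continuous_star.measurable.comp (hcm.sub_const m)
    have hb2 : Integrable (fun θ : ℝ =>
        ‖(starRingEnd ℂ) (Complex.exp ((θ:ℂ) * Complex.I) - m) * f (θ - g)‖ ^ 2)
        (volume.restrict (Set.Ioc 0 (2 * Real.pi))) := by
      refine hintv.congr (Filter.Eventually.of_forall fun θ => ?_)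
      simp only [norm_mul, RCLike.norm_conj]
    have := cs_aux (μ := volume.restrict (Set.Ioc 0 (2 * Real.pi)))
      (v := fun θ => (starRingEnd ℂ) (Complex.exp ((θ:ℂ) * Complex.I) - m) * f (θ - g)) hmeas (hbm.mul hvm) hwμ hb2
    have hbeq : ∫ θ in Set.Ioc (0:ℝ) (2 * Real.pi),
        ‖(starRingEnd ℂ) (Complex.exp ((θ:ℂ) * Complex.I) - m) * f (θ - g)‖ ^ 2
        = 1 - ‖m‖ ^ 2 := by
      rw [← hvarv]
      refine integral_congr_ae (Filter.Eventually.of_forall fun θ => ?_)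
      simp only [norm_mul, RCLike.norm_conj]
    rw [hbeq, hw1, Real.sqrt_one, one_mul, hme, ← hσ] at this
    exact this
  -- combine
  have hkey : ‖e - m‖ * ‖A‖ ≤ 2 * Real.sqrt σ := by
    have h1 : (e - m) * A = (B - m * A) - (B - e * A) := by ring
    calc ‖e - m‖ * ‖A‖ = ‖(e - m) * A‖ := (norm_mul _ _).symm
      _ = ‖(B - m * A) - (B - e * A)‖ := by rw [h1]
      _ ≤ ‖B - m * A‖ + ‖B - e * A‖ := norm_sub_le _ _
      _ ≤ 2 * Real.sqrt σ := by linarith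
  -- compute ‖e - m‖ = 2r
  have hem : ‖e - m‖ = 2 * r := by
    have h1 : e - m = e * (1 - Complex.exp ((g:ℂ) * Complex.I)) := by
      rw [hmdef]; ring
    have h2 : ‖(1 : ℂ) - Complex.exp ((g:ℂ) * Complex.I)‖ ^ 2 = 2 - 2 * Real.cos g := by
      rw [Complex.sq_norm, Complex.normSq_apply]
      simp only [Complex.sub_re, Complex.sub_im, Complex.one_re, Complex.one_im,
        Complex.exp_ofReal_mul_I_re, Complex.exp_ofReal_mul_I_im]
      have := Real.sin_sq_add_cos_sq g
      nlinarith
    have h3 : ‖(1 : ℂ) - Complex.exp ((g:ℂ) * Complex.I)‖ = Real.sqrt (2 - 2 * Real.cos g) := by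
      rw [← h2, Real.sqrt_sq (norm_nonneg _)]
    have h4 : ‖e‖ = Real.sqrt (1 - σ) := by
      rw [hσ1, Real.sqrt_sq (norm_nonneg _)]
    rw [h1, norm_mul, h3, h4, hr, ← Real.sqrt_mul (by rw [hσ1]; positivity)]
    ring
  -- conclude
  have hA : ‖A‖ ≤ Real.sqrt σ / r := by
    rw [hem] at hkey
    rw [le_div_iff₀ hrpos]
    nlinarith
  have hgoal : ‖∫ θ in (0:ℝ)..(2 * Real.pi), f θ * (starRingEnd ℂ) (f (θ - g))‖ = ‖A‖ := by
    rw [intervalIntegral.integral_of_le hπ.le, hAdef]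
  rw [hgoal]
  have h5 : 2 * Real.sqrt σ / r = Real.sqrt σ / r + Real.sqrt σ / r := by ring
  have h6 : 0 ≤ Real.sqrt σ / r := by positivity
  have h7 : 0 ≤ σ / r ^ 2 := by positivity
  linarith
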